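/- Fix N, n ∈ ℕ with n ≥ 1, a matrix g : Fin N → Fin N → ℂ, and multi-indices α, β with |α| = |β| = n. For every index I with β_I ≥ 1, the permanent of the block-constant matrix G^{α,β} admits the block-column expansion P(α, β) = Σ_{K=1}^{N} α_K · g(K, I) · P(α − e_K, β − e_I), where the terms with α_K = 0 vanish. -/

import Mathlib

open Finset

lemma blk_lt {N : ℕ} (α : Fin N → ℕ) (x : Fin (∑ i, α i)) :
    ({p : Fin N | ∑ i ∈ Finset.Iic p, α i ≤ (x : ℕ)} : Finset (Fin N)).card < N := by
  cases N with
  | zero => exact absurd x.isLt (by simp)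
  | succ M =>
    have hIic : Finset.Iic (Fin.last M) = (Finset.univ : Finset (Fin (M + 1))) := by
      ext p; simp [Fin.le_last]
    have hmem : Fin.last M ∉
        ({p : Fin (M + 1) | ∑ i ∈ Finset.Iic p, α i ≤ (x : ℕ)} : Finset (Fin (M + 1))) := by
      simp only [Finset.mem_filter, Finset.mem_univ, true_and, not_le, hIic]
      exact x.isLt
    have hss : ({p : Fin (M + 1) | ∑ i ∈ Finset.Iic p, α i ≤ (x : ℕ)} : Finset (Fin (M + 1)))
        ⊂ Finset.univ := by
      refine Finset.ssubset_univ_iff.mpr fun h => hmem ?_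
      rw [h]; exact Finset.mem_univ _
    simpa using Finset.card_lt_card hss

/-- The block (among consecutive blocks of sizes `α 0, …, α (N-1)`) containing position `x`:
positions `0, …, α 0 - 1` lie in block `0`, the next `α 1` positions in block `1`, etc. -/
def blkIdx {N : ℕ} (α : Fin N → ℕ) (x : Fin (∑ i, α i)) : Fin N :=
  ⟨({p : Fin N | ∑ i ∈ Finset.Iic p, α i ≤ (x : ℕ)} : Finset (Fin N)).card, blk_lt α x⟩

/-- `blockPerm g α β` is the permanent of the `n × n` block-constant matrix `G^{α,β}`
(`n = |α| = |β|`) whose rows are partitioned into consecutive blocks of sizes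
`α 0, …, α (N-1)`, columns into consecutive blocks of sizes `β 0, …, β (N-1)`, and whose
entry in row-block `p` and column-block `q` is `g p q`.  (If `|α| ≠ |β|` the value is `0`.) -/
noncomputable def blockPerm {N : ℕ} (g : Fin N → Fin N → ℂ) (α β : Fin N → ℕ) : ℂ :=
  if h : ∑ i, α i = ∑ i, β i then
    Matrix.permanent
      (Matrix.of fun x y : Fin (∑ i, α i) => g (blkIdx α x) (blkIdx β (Fin.cast h y)))
  else 0

section Aux
open Matrix Equiv
set_option maxHeartbeats 1000000


variable {R : Type*} [CommSemiring R]

theorem my_permanent_succ_column_zero {n : ℕ} (A : Matrix (Fin n.succ) (Fin n.succ) R) :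
    A.permanent = ∑ i : Fin n.succ, A i 0 * (A.submatrix i.succAbove Fin.succ).permanent := by
  rw [Matrix.permanent, Finset.univ_perm_fin_succ, ← Finset.univ_product_univ]
  simp only [Finset.sum_map, Equiv.toEmbedding_apply, Finset.sum_product]
  refine Finset.sum_congr rfl fun i _ => Fin.cases ?_ (fun i => ?_) i
  · simp only [Fin.prod_univ_succ, Matrix.permanent, Finset.mul_sum,
      Equiv.Perm.decomposeFin_symm_apply_zero, Fin.val_zero, one_mul,
      Equiv.Perm.decomposeFin_symm_apply_succ, Fin.succAbove_zero, id, of_apply, Equiv.swap_self, Equiv.coe_refl, Matrix.submatrix_apply]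
  · rw [← Matrix.permanent_permute_cols i.cycleRange
      ((A.submatrix (Fin.succ i).succAbove Fin.succ))]
    rw [Matrix.permanent, Finset.mul_sum]
    refine Finset.sum_congr rfl fun σ _ => ?_
    simp only [Fin.prod_univ_succ, Equiv.Perm.decomposeFin_symm_apply_zero,
      Equiv.Perm.decomposeFin_symm_apply_succ, Matrix.submatrix_apply, Fin.succAbove_cycleRange,
      of_apply, id]

theorem my_permanent_succ_row_zero {n : ℕ} (A : Matrix (Fin n.succ) (Fin n.succ) R) :
    A.permanent = ∑ j : Fin n.succ, A 0 j * (A.submatrix Fin.succ j.succAbove).permanent := by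
  rw [← Matrix.permanent_transpose A, my_permanent_succ_column_zero]
  refine Finset.sum_congr rfl fun i _ => ?_
  rw [← Matrix.permanent_transpose]
  simp only [Matrix.transpose_apply, Matrix.transpose_submatrix, Matrix.transpose_transpose]

theorem my_permanent_succ_row {n : ℕ} (A : Matrix (Fin n.succ) (Fin n.succ) R) (i : Fin n.succ) :
    A.permanent = ∑ j : Fin n.succ, A i j * (A.submatrix i.succAbove j.succAbove).permanent := by
  rw [← Matrix.permanent_permute_cols i.cycleRange⁻¹ A, my_permanent_succ_row_zero]
  refine Finset.sum_congr rfl fun j _ => ?_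
  rw [Matrix.submatrix_apply, Matrix.submatrix_submatrix, Function.comp_def, Function.comp_def]
  congr
  · rw [Equiv.Perm.inv_def, Fin.cycleRange_symm_zero]
  · ext i' j'
    simp only [Matrix.submatrix_apply, Equiv.Perm.inv_def, Fin.cycleRange_symm_succ, id]

theorem my_permanent_succ_column {n : ℕ} (A : Matrix (Fin n.succ) (Fin n.succ) R)
    (j : Fin n.succ) :
    A.permanent = ∑ i : Fin n.succ, A i j * (A.submatrix i.succAbove j.succAbove).permanent := by
  rw [← Matrix.permanent_transpose A, my_permanent_succ_row _ j]
  refine Finset.sum_congr rfl fun i _ => ?_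
  rw [← Matrix.permanent_transpose]
  simp only [Matrix.transpose_apply, Matrix.transpose_submatrix, Matrix.transpose_transpose]


theorem my_permanent_reindex {m n : Type*} [DecidableEq m] [Fintype m] [DecidableEq n] [Fintype n]
    {R : Type*} [CommSemiring R] (e : m ≃ n) (A : Matrix n n R) :
    (A.submatrix e e).permanent = A.permanent := by
  rw [Matrix.permanent, Matrix.permanent]
  refine Fintype.sum_equiv (Equiv.permCongr e) _ _ fun σ => ?_
  refine Fintype.prod_equiv e _ _ fun i => ?_
  simp [Equiv.permCongr_apply]

-- characterization of blkIdx (copied defs needed; test with local copies)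
lemma blkIdx_eq {N : ℕ} (α : Fin N → ℕ) (x : Fin (∑ i, α i)) (K : Fin N)
    (h1 : ∑ i ∈ Finset.Iio K, α i ≤ (x : ℕ)) (h2 : (x : ℕ) < ∑ i ∈ Finset.Iic K, α i) :
    blkIdx α x = K := by
  have hset : ({p : Fin N | ∑ i ∈ Finset.Iic p, α i ≤ (x : ℕ)} : Finset (Fin N))
      = Finset.Iio K := by
    ext p
    simp only [Finset.mem_filter, Finset.mem_univ, true_and, Finset.mem_Iio]
    constructor
    · intro hp
      by_contra hpK
      push_neg at hpK
      exact absurd (le_trans (Finset.sum_le_sum_of_subset (Finset.Iic_subset_Iic.mpr hpK)) hp)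
        (not_le.mpr h2)
    · intro hp
      exact le_trans (Finset.sum_le_sum_of_subset (fun i hi => Finset.mem_Iio.mpr
        (lt_of_le_of_lt (Finset.mem_Iic.mp hi) hp))) h1
  apply Fin.ext
  simp only [blkIdx, hset]
  exact Fin.card_Iio K ▸ rfl

lemma blkIdx_spec {N : ℕ} (α : Fin N → ℕ) (x : Fin (∑ i, α i)) :
    ∑ i ∈ Finset.Iio (blkIdx α x), α i ≤ (x : ℕ) ∧
      (x : ℕ) < ∑ i ∈ Finset.Iic (blkIdx α x), α i := by
  -- find K with the property
  have hN : 0 < N := by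
    rcases Nat.eq_zero_or_pos N with h | h
    · subst h; exact absurd x.isLt (by simp)
    · exact h
  have hne : ({p : Fin N | (x : ℕ) < ∑ i ∈ Finset.Iic p, α i} : Finset (Fin N)).Nonempty := by
    refine ⟨Fin.last (N - 1) |>.cast (by omega), ?_⟩
    simp only [Finset.mem_filter, Finset.mem_univ, true_and]
    refine lt_of_lt_of_le x.isLt (le_of_eq ?_)
    refine (Finset.sum_subset (Finset.subset_univ _) ?_).symm
    intro i _ hi
    exfalso
    apply hi
    simp only [Finset.mem_Iic]
    exact Fin.le_def.mpr (by simp [Fin.last]; omega)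
  set T := ({p : Fin N | (x : ℕ) < ∑ i ∈ Finset.Iic p, α i} : Finset (Fin N))
  obtain ⟨K, hKmem, hKmin⟩ := T.exists_min_image id hne
  simp only [Finset.mem_filter, Finset.mem_univ, true_and, T] at hKmem
  have h1 : ∑ i ∈ Finset.Iio K, α i ≤ (x : ℕ) := by
    rcases Nat.eq_zero_or_pos K.val with hK0 | hK0
    · have : Finset.Iio K = ∅ := by
        ext p; simp only [Finset.mem_Iio, Finset.notMem_empty, iff_false, not_lt]
        exact Fin.le_def.mpr (by omega)
      simp [this]
    · have hK' : (⟨K.val - 1, by omega⟩ : Fin N) ∉ T := by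
        intro hmem
        have h := hKmin _ hmem
        simp only [id] at h
        rw [Fin.le_def] at h
        simp only [Fin.val_mk] at h
        omega
      simp only [Finset.mem_filter, Finset.mem_univ, true_and, not_lt, T] at hK'
      have hIio : Finset.Iio K = Finset.Iic (⟨K.val - 1, by omega⟩ : Fin N) := by
        ext p
        simp only [Finset.mem_Iio, Finset.mem_Iic, Fin.lt_def, Fin.le_def, Fin.val_mk]
        omega
      rw [hIio]; exact hK'
  rw [blkIdx_eq α x K h1 hKmem]
  exact ⟨h1, hKmem⟩

lemma sum_sub_single {N : ℕ} (α : Fin N → ℕ) (K : Fin N) (hK : 1 ≤ α K) (s : Finset (Fin N)) :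
    ∑ i ∈ s, α i = (∑ i ∈ s, (α i - if i = K then 1 else 0)) + (if K ∈ s then 1 else 0) := by
  rw [← Finset.sum_ite_eq' s K (fun _ => 1), ← Finset.sum_add_distrib]
  refine Finset.sum_congr rfl fun i _ => ?_
  by_cases h : i = K
  · subst h; simp [Nat.sub_add_cancel hK]
  · simp [h]

lemma blkIdx_pred {N : ℕ} (α : Fin N → ℕ) (K : Fin N) (hK : 1 ≤ α K) (rv : ℕ)
    (hr1 : ∑ i ∈ Finset.Iio K, α i ≤ rv) (hr2 : rv < ∑ i ∈ Finset.Iic K, α i)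
    (x : Fin (∑ i, (α i - if i = K then 1 else 0)))
    (y : Fin (∑ i, α i))
    (hy : (y : ℕ) = if (x : ℕ) < rv then (x : ℕ) else (x : ℕ) + 1) :
    blkIdx α y = blkIdx (fun i => α i - if i = K then 1 else 0) x := by
  obtain ⟨hs1, hs2⟩ := blkIdx_spec (fun i => α i - if i = K then 1 else 0) x
  set J := blkIdx (fun i => α i - if i = K then 1 else 0) x with hJdef
  have hs1' : ∑ i ∈ Finset.Iio J, (α i - if i = K then 1 else 0) ≤ (x : ℕ) := hs1
  have hs2' : (x : ℕ) < ∑ i ∈ Finset.Iic J, (α i - if i = K then 1 else 0) := hs2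
  clear hs1 hs2
  have e1 := sum_sub_single α K hK (Finset.Iio J)
  have e2 := sum_sub_single α K hK (Finset.Iic J)
  have e3 := sum_sub_single α K hK (Finset.Iio K)
  have e4 := sum_sub_single α K hK (Finset.Iic K)
  rw [if_neg (by simp)] at e3
  rw [if_pos (by simp)] at e4
  by_cases hxr : (x : ℕ) < rv
  · have hy' : (y : ℕ) = (x : ℕ) := by rw [hy, if_pos hxr]
    have hKJ : ¬ K < J := by
      intro hKJ
      have hsub : Finset.Iic K ⊆ Finset.Iio J := fun i hi =>
        Finset.mem_Iio.mpr (lt_of_le_of_lt (Finset.mem_Iic.mp hi) hKJ)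
      have hmono : ∑ i ∈ Finset.Iic K, (α i - if i = K then 1 else 0)
          ≤ ∑ i ∈ Finset.Iio J, (α i - if i = K then 1 else 0) :=
        Finset.sum_le_sum_of_subset hsub
      omega
    rw [if_neg (by simpa [Finset.mem_Iio] using hKJ)] at e1
    refine blkIdx_eq _ _ _ ?_ ?_
    · omega
    · have hsub2 : ∑ i ∈ Finset.Iic J, (α i - if i = K then 1 else 0)
          ≤ ∑ i ∈ Finset.Iic J, α i :=
        Finset.sum_le_sum fun i _ => Nat.sub_le _ _
      omega
  · have hy' : (y : ℕ) = (x : ℕ) + 1 := by rw [hy, if_neg hxr]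
    have hKJ : K ≤ J := by
      by_contra hKJ
      push_neg at hKJ
      have hsub : Finset.Iic J ⊆ Finset.Iio K := fun i hi =>
        Finset.mem_Iio.mpr (lt_of_le_of_lt (Finset.mem_Iic.mp hi) hKJ)
      have hmono : ∑ i ∈ Finset.Iic J, (α i - if i = K then 1 else 0)
          ≤ ∑ i ∈ Finset.Iio K, (α i - if i = K then 1 else 0) :=
        Finset.sum_le_sum_of_subset hsub
      omega
    rw [if_pos (by simpa [Finset.mem_Iic] using hKJ)] at e2
    refine blkIdx_eq _ _ _ ?_ ?_
    · have hle : (if K ∈ Finset.Iio J then 1 else 0) ≤ 1 := by split <;> omega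
      omega
    · omega

lemma val_succAbove {m : ℕ} (r : Fin (m + 1)) (z : Fin m) :
    ((r.succAbove z : Fin (m + 1)) : ℕ) = if (z : ℕ) < (r : ℕ) then (z : ℕ) else (z : ℕ) + 1 := by
  rw [Fin.succAbove]
  split <;> rename_i h
  · rw [Fin.lt_def] at h
    simp only [Fin.coe_castSucc] at h ⊢
    rw [if_pos h]
  · rw [Fin.lt_def] at h
    simp only [Fin.coe_castSucc] at h
    simp only [Fin.val_succ]
    rw [if_neg (by omega)]


end Aux

set_option maxHeartbeats 1000000 in
/-- **Block-column expansion of the permanent of a block-constant matrix.**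
For multi-indices `α, β : Fin N → ℕ` of common weight `n ≥ 1` and a column-block index `I`
with `β I ≥ 1`, the permanent `P(α, β)` of the block-constant matrix `G^{α,β}` satisfies
`P(α, β) = ∑_K α_K · g K I · P(α - e_K, β - e_I)` (the terms with `α K = 0` vanish,
thanks to the factor `α K`, so truncated subtraction is harmless there). -/
theorem block_permanent_column_expansion (N n : ℕ) (hn : 1 ≤ n) (g : Fin N → Fin N → ℂ)
    (α β : Fin N → ℕ) (hα : ∑ i, α i = n) (hβ : ∑ i, β i = n) (I : Fin N) (hI : 1 ≤ β I) :
    blockPerm g α β =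
      ∑ K : Fin N, (α K : ℂ) * g K I *
        blockPerm g (fun i => α i - if i = K then 1 else 0)
          (fun i => β i - if i = I then 1 else 0) := by
  obtain ⟨m, rfl⟩ : ∃ m, n = m + 1 := ⟨n - 1, by omega⟩
  have hαβ : ∑ i, α i = ∑ i, β i := hα.trans hβ.symm
  -- the matrix over `Fin (m+1)`
  set M : Matrix (Fin (m + 1)) (Fin (m + 1)) ℂ :=
    Matrix.of fun x y => g (blkIdx α (Fin.cast hα.symm x)) (blkIdx β (Fin.cast hβ.symm y))
    with hM
  have hMP : blockPerm g α β = M.permanent := by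
    rw [blockPerm, dif_pos hαβ, ← my_permanent_reindex (finCongr hα) M]
    congr 1
  -- column sums for β
  have hβIic : ∑ i ∈ Finset.Iic I, β i = ∑ i ∈ Finset.Iio I, β i + β I := by
    rw [← Finset.Iio_insert, Finset.sum_insert (by simp)]; ring
  have hβle : ∑ i ∈ Finset.Iic I, β i ≤ m + 1 := by
    rw [← hβ]; exact Finset.sum_le_sum_of_subset (Finset.subset_univ _)
  set cv : ℕ := ∑ i ∈ Finset.Iio I, β i with hcv
  set c : Fin (m + 1) := ⟨cv, by omega⟩ with hc
  have hcI : blkIdx β (Fin.cast hβ.symm c) = I :=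
    blkIdx_eq β _ I (le_refl _) (by show cv < _; omega)
  rw [hMP, my_permanent_succ_column M c]
  rw [← Finset.sum_fiberwise Finset.univ (fun r : Fin (m + 1) => blkIdx α (Fin.cast hα.symm r))
    (fun r => M r c * (M.submatrix r.succAbove c.succAbove).permanent)]
  refine Finset.sum_congr rfl fun K _ => ?_
  -- sums for α at K
  have hαIic : ∑ i ∈ Finset.Iic K, α i = ∑ i ∈ Finset.Iio K, α i + α K := by
    rw [← Finset.Iio_insert, Finset.sum_insert (by simp)]; ring
  have hαle : ∑ i ∈ Finset.Iic K, α i ≤ m + 1 := by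
    rw [← hα]; exact Finset.sum_le_sum_of_subset (Finset.subset_univ _)
  -- membership characterization
  have hmem : ∀ r : Fin (m + 1),
      (blkIdx α (Fin.cast hα.symm r) = K) ↔
        (∑ i ∈ Finset.Iio K, α i ≤ (r : ℕ) ∧ (r : ℕ) < ∑ i ∈ Finset.Iic K, α i) := by
    intro r
    constructor
    · intro h
      have := blkIdx_spec α (Fin.cast hα.symm r)
      rw [h] at this
      simpa using this
    · intro ⟨h1, h2⟩
      exact blkIdx_eq α _ K (by simpa using h1) (by simpa using h2)
  -- cardinality of the fiber
  have hcard : (Finset.univ.filter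
      (fun r : Fin (m + 1) => blkIdx α (Fin.cast hα.symm r) = K)).card = α K := by
    rw [← Fintype.card_fin (α K), ← Finset.card_univ]
    refine Finset.card_bij'
      (fun r hr => (⟨(r : ℕ) - ∑ i ∈ Finset.Iio K, α i, by
        have := (hmem r).mp (by simpa using hr); omega⟩ : Fin (α K)))
      (fun b _ => (⟨∑ i ∈ Finset.Iio K, α i + (b : ℕ), by omega⟩ : Fin (m + 1)))
      (fun r hr => Finset.mem_univ _)
      (fun b _ => by
        simp only [Finset.mem_filter, Finset.mem_univ, true_and]
        refine (hmem _).mpr ⟨?_, ?_⟩ <;> simp only [Fin.val_mk] <;> omega)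
      (fun r hr => by
        have := (hmem r).mp (by simpa using hr)
        apply Fin.ext
        simp only [Fin.val_mk]
        omega)
      (fun b _ => by apply Fin.ext; simp only [Fin.val_mk]; omega)
  -- per-term value
  have hterm : ∀ r ∈ Finset.univ.filter
      (fun r : Fin (m + 1) => blkIdx α (Fin.cast hα.symm r) = K),
      M r c * (M.submatrix r.succAbove c.succAbove).permanent =
        g K I * blockPerm g (fun i => α i - if i = K then 1 else 0)
          (fun i => β i - if i = I then 1 else 0) := by
    intro r hr
    rw [Finset.mem_filter] at hr
    have hrK := hr.2
    have hrb := (hmem r).mp hrK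
    have hαK : 1 ≤ α K := by omega
    have hsumα := sum_sub_single α K hαK Finset.univ
    rw [if_pos (Finset.mem_univ _)] at hsumα
    have hsumβ := sum_sub_single β I hI Finset.univ
    rw [if_pos (Finset.mem_univ _)] at hsumβ
    have hsumα' : ∑ i, (α i - if i = K then 1 else 0) = m := by omega
    have hsumβ' : ∑ i, (β i - if i = I then 1 else 0) = m := by omega
    have hαβ' : ∑ i, (α i - if i = K then 1 else 0) = ∑ i, (β i - if i = I then 1 else 0) := by
      omega
    have hMrc : M r c = g K I := by
      rw [hM]; simp only [Matrix.of_apply]; rw [hrK, hcI]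
    rw [hMrc]
    congr 1
    -- the minor equals the block matrix of the reduced multi-indices
    rw [blockPerm, dif_pos hαβ',
      ← my_permanent_reindex (finCongr hsumα') (M.submatrix r.succAbove c.succAbove)]
    congr 1
    ext x y
    simp only [Matrix.submatrix_apply, Matrix.of_apply, finCongr_apply, hM]
    congr 1
    · exact blkIdx_pred α K hαK (r : ℕ) hrb.1 hrb.2 x
        (Fin.cast hα.symm (r.succAbove (Fin.cast hsumα' x))) (by
          simp only [Fin.coe_cast]
          rw [val_succAbove]
          simp only [Fin.coe_cast])
    · exact blkIdx_pred β I hI cv (le_refl _) (by omega) (Fin.cast hαβ' y)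
        (Fin.cast hβ.symm (c.succAbove (Fin.cast hsumα' y))) (by
          simp only [Fin.coe_cast]
          rw [val_succAbove]
          simp only [Fin.coe_cast, hc, Fin.val_mk])
  rw [Finset.sum_congr rfl hterm, Finset.sum_const, hcard, nsmul_eq_mul]
  ring
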